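/- Let A = (a_{ij}) ∈ (𝕊max^∨)^{n×n} be TPD with diagonal entries d₁, …, dₙ. Then a signed element γ ∈ 𝕊max^∨ satisfies det(γ⊙I ⊖ A) ∇ 𝟘 (i.e. γ is an 𝕊max-eigenvalue of A) if and only if γ = d_i for some i ∈ [n]; moreover the characteristic polynomial function of A factors as det(x⊙I ⊖ A) = (x ⊖ d₁) ⊙ (x ⊖ d₂) ⊙ ⋯ ⊙ (x ⊖ dₙ) for every x ∈ 𝕊max. -/

import Mathlib

/-!
Common framework: the symmetrized tropical semiring 𝕊max over a linearly
ordered abelian group Γ, represented concretely: an element is either 𝟘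
(represented by `none`) or a pair of a modulus `c : Γ` and a sign
(positive, negative or balanced), matching the classes of the quotient
𝕋max²/ℛ described in the paper.
-/

namespace TropPaper

inductive SSign : Type
  | pos
  | neg
  | bal
  deriving DecidableEq

/-- The symmetrized tropical semiring 𝕊max(Γ): `none` is 𝟘, and
`some (c, s)` is the class of modulus `c` and sign `s`. -/
def Smax (Γ : Type) : Type := Option (Γ × SSign)

/-- Γ is divisible. -/
def DivisibleGrp (Γ : Type) [AddCommGroup Γ] : Prop :=
  ∀ k : ℕ, 0 < k → ∀ a : Γ, ∃ b : Γ, k • b = a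

section Defs

variable {Γ : Type} [AddCommGroup Γ] [LinearOrder Γ] [IsOrderedAddMonoid Γ]

/-- 𝟘 -/
def szero : Smax Γ := none

/-- 𝟙 -/
def sone : Smax Γ := some ((0 : Γ), SSign.pos)

/-- modulus |·| : 𝕊max → 𝕋max = WithBot Γ -/
def smod : Smax Γ → WithBot Γ
  | none => ⊥
  | some (c, _) => (c : WithBot Γ)

def sgnMul : SSign → SSign → SSign
  | SSign.pos, t => t
  | SSign.neg, SSign.pos => SSign.neg
  | SSign.neg, SSign.neg => SSign.pos
  | SSign.neg, SSign.bal => SSign.bal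
  | SSign.bal, _ => SSign.bal

/-- ⊕ on 𝕊max -/
def sadd : Smax Γ → Smax Γ → Smax Γ
  | none, b => b
  | some a, none => some a
  | some (c, s), some (d, t) =>
      if c < d then some (d, t)
      else if d < c then some (c, s)
      else some (c, if s = t then s else SSign.bal)

/-- ⊖ (unary) on 𝕊max -/
def sneg : Smax Γ → Smax Γ
  | none => none
  | some (c, SSign.pos) => some (c, SSign.neg)
  | some (c, SSign.neg) => some (c, SSign.pos)
  | some (c, SSign.bal) => some (c, SSign.bal)

/-- ⊙ on 𝕊max -/
def smul : Smax Γ → Smax Γ → Smax Γ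
  | none, _ => none
  | some _, none => none
  | some (c, s), some (d, t) => some (c + d, sgnMul s t)

/-- a ⊖ b -/
def ssub (a b : Smax Γ) : Smax Γ := sadd a (sneg b)

/-- a° = a ⊖ a -/
def sbal (a : Smax Γ) : Smax Γ := ssub a a

/-- the positive element with the same modulus (|·| seen inside 𝕊max⊕) -/
def sabs : Smax Γ → Smax Γ
  | none => none
  | some (c, _) => some (c, SSign.pos)

/-- multiplicative inverse (of invertible, i.e. signed nonzero, elements) -/
def sinv : Smax Γ → Smax Γ
  | none => none
  | some (c, s) => some (-c, s)

/-- a^{⊙k} -/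
def spow (a : Smax Γ) : ℕ → Smax Γ
  | 0 => sone
  | k + 1 => smul a (spow a k)

/-- membership in 𝕊max° (balanced elements together with 𝟘) -/
def IsBal : Smax Γ → Prop
  | none => True
  | some (_, s) => s = SSign.bal

/-- membership in 𝕊max⊕ (positive elements together with 𝟘) -/
def IsPos : Smax Γ → Prop
  | none => True
  | some (_, s) => s = SSign.pos

/-- membership in 𝕊max^∨ (signed elements) -/
def IsSigned : Smax Γ → Prop
  | none => True
  | some (_, s) => s ≠ SSign.bal

/-- the balance relation a ∇ b -/
def Balance (a b : Smax Γ) : Prop := IsBal (ssub a b)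

/-- a ⪯ b -/
def natLe (a b : Smax Γ) : Prop := sadd a b = b

/-- a ≤ b :⟺ b ⊖ a ∈ 𝕊max⊕ ∪ 𝕊max° -/
def sle (a b : Smax Γ) : Prop := IsPos (ssub b a) ∨ IsBal (ssub b a)

/-- a < b :⟺ b ⊖ a ∈ 𝕊max⊕ ∖ {𝟘} -/
def slt (a b : Smax Γ) : Prop := IsPos (ssub b a) ∧ ssub b a ≠ szero

/-- finite ⊕-sum over a list -/
def sumS {α : Type} (l : List α) (f : α → Smax Γ) : Smax Γ :=
  (l.map f).foldr sadd szero

/-- finite ⊙-product over a list -/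
def prodS {α : Type} (l : List α) (f : α → Smax Γ) : Smax Γ :=
  (l.map f).foldr smul sone

/-- the zero vector -/
def zeroVecS {n : ℕ} : Fin n → Smax Γ := fun _ => szero

def VecSigned {n : ℕ} (x : Fin n → Smax Γ) : Prop := ∀ i, IsSigned (x i)

def MatSigned {n : ℕ} (A : Matrix (Fin n) (Fin n) (Smax Γ)) : Prop :=
  ∀ i j, IsSigned (A i j)

def SymmS {n : ℕ} (A : Matrix (Fin n) (Fin n) (Smax Γ)) : Prop :=
  ∀ i j, A i j = A j i

/-- A ⊙ v -/
def matVecS {n : ℕ} (A : Matrix (Fin n) (Fin n) (Smax Γ)) (v : Fin n → Smax Γ) :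
    Fin n → Smax Γ :=
  fun i => sumS (List.finRange n) fun j => smul (A i j) (v j)

/-- A ⊙ B -/
def matMulS {n : ℕ} (A B : Matrix (Fin n) (Fin n) (Smax Γ)) :
    Matrix (Fin n) (Fin n) (Smax Γ) :=
  Matrix.of fun i j => sumS (List.finRange n) fun l => smul (A i l) (B l j)

/-- the identity matrix I -/
def idMatS {n : ℕ} : Matrix (Fin n) (Fin n) (Smax Γ) :=
  Matrix.of fun i j => if i = j then sone else szero

/-- xᵀ ⊙ A ⊙ x -/
def quadFormS {n : ℕ} (A : Matrix (Fin n) (Fin n) (Smax Γ)) (x : Fin n → Smax Γ) :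
    Smax Γ :=
  sumS (List.finRange n) fun i => sumS (List.finRange n) fun j =>
    smul (x i) (smul (A i j) (x j))

/-- tropical positive definiteness (the quadratic-form condition) -/
def TPD {n : ℕ} (A : Matrix (Fin n) (Fin n) (Smax Γ)) : Prop :=
  ∀ x : Fin n → Smax Γ, VecSigned x → x ≠ zeroVecS → slt szero (quadFormS A x)

/-- tropical positive semidefiniteness -/
def TPSD {n : ℕ} (A : Matrix (Fin n) (Fin n) (Smax Γ)) : Prop :=
  ∀ x : Fin n → Smax Γ, VecSigned x → x ≠ zeroVecS → sle szero (quadFormS A x)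

/-- sgn(π) ∈ {𝟙, ⊖𝟙} -/
def permSignS {n : ℕ} (π : Equiv.Perm (Fin n)) : Smax Γ :=
  if (Equiv.Perm.sign π : ℤ) = 1 then sone else sneg sone

/-- the determinant over 𝕊max -/
noncomputable def detS {n : ℕ} (M : Matrix (Fin n) (Fin n) (Smax Γ)) : Smax Γ :=
  sumS (Finset.univ : Finset (Equiv.Perm (Fin n))).toList fun π =>
    smul (permSignS π) (prodS (List.finRange n) fun i => M i (π i))

/-- the adjugate matrix over 𝕊max -/
noncomputable def adjS {n : ℕ} (M : Matrix (Fin (n+1)) (Fin (n+1)) (Smax Γ)) :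
    Matrix (Fin (n+1)) (Fin (n+1)) (Smax Γ) :=
  Matrix.of fun i j =>
    smul (spow (sneg sone) (i.val + j.val))
      (detS (Matrix.of fun a b : Fin n => M (Fin.succAbove j a) (Fin.succAbove i b)))

/-- γ ⊙ I ⊖ A -/
def charMatS {n : ℕ} (γ : Smax Γ) (A : Matrix (Fin n) (Fin n) (Smax Γ)) :
    Matrix (Fin n) (Fin n) (Smax Γ) :=
  Matrix.of fun i j => ssub (smul γ (idMatS i j)) (A i j)

/-- tr_k(A) = ⊕_{|K| = k} det(A[K,K]) -/
noncomputable def trkS {n : ℕ} (k : ℕ) (A : Matrix (Fin n) (Fin n) (Smax Γ)) : Smax Γ :=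
  sumS ((Finset.univ : Finset (Fin n)).powersetCard k).attach.toList fun K =>
    detS (Matrix.of fun a b : Fin k =>
      A (K.1.orderEmbOfFin (Finset.mem_powersetCard.mp K.2).2 a)
        (K.1.orderEmbOfFin (Finset.mem_powersetCard.mp K.2).2 b))

/-- matrix power A^{⊙k} -/
def matPowS {n : ℕ} (A : Matrix (Fin n) (Fin n) (Smax Γ)) :
    ℕ → Matrix (Fin n) (Fin n) (Smax Γ)
  | 0 => idMatS
  | k + 1 => matMulS A (matPowS A k)

/-- partial Kleene sums I ⊕ A ⊕ ⋯ ⊕ A^{⊙m} -/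
def starPartialS {n : ℕ} (A : Matrix (Fin n) (Fin n) (Smax Γ)) (m : ℕ) :
    Matrix (Fin n) (Fin n) (Smax Γ) :=
  Matrix.of fun i j => sumS (List.range (m+1)) fun k => matPowS A k i j

/-- the diagonal matrix D^(k) with diagonal (γ₁,…,γ_{k−1},𝟘,…,𝟘) (0-based k) -/
def DmatS {n : ℕ} (A : Matrix (Fin n) (Fin n) (Smax Γ)) (k : Fin n) :
    Matrix (Fin n) (Fin n) (Smax Γ) :=
  Matrix.of fun i j => if i = j ∧ i < k then A i i else szero

/-- the complementary matrix A^(k) -/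
def AmatS {n : ℕ} (A : Matrix (Fin n) (Fin n) (Smax Γ)) (k : Fin n) :
    Matrix (Fin n) (Fin n) (Smax Γ) :=
  Matrix.of fun i j => if i ≠ j ∨ k ≤ i then A i j else szero

/-- M = (γ⊙I ⊖ D^(k))^{⊙−1} ⊙ A^(k) -/
def MmatS {n : ℕ} (A : Matrix (Fin n) (Fin n) (Smax Γ)) (k : Fin n) :
    Matrix (Fin n) (Fin n) (Smax Γ) :=
  Matrix.of fun i j =>
    smul (sinv (if i < k then sneg (A i i) else A k k)) (AmatS A k i j)

/-- λ_k = (⊖𝟙)^{⊙(k−1)} ⊙ γ₁ ⊙ ⋯ ⊙ γ_{k−1} ⊙ γ^{⊙(n−k)} (0-based k, size n) -/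
def lamkS {n : ℕ} (A : Matrix (Fin n) (Fin n) (Smax Γ)) (k : Fin n) : Smax Γ :=
  smul (spow (sneg sone) k.val)
    (smul (prodS ((List.finRange n).filter (fun i => i < k)) fun i => A i i)
      (spow (A k k) (n - 1 - k.val)))

/-- irreducibility: the digraph of nonzero entries is strongly connected -/
def IrreducibleS {n : ℕ} (A : Matrix (Fin n) (Fin n) (Smax Γ)) : Prop :=
  ∀ i j : Fin n, Relation.ReflTransGen (fun a b => A a b ≠ szero) i j

/-- diagonal entries sorted non-increasingly for ⪯ -/
def DiagSortedS {n : ℕ} (A : Matrix (Fin n) (Fin n) (Smax Γ)) : Prop :=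
  ∀ i j : Fin n, i ≤ j → natLe (A j j) (A i i)

/-! 𝕋max-side notions (for the characteristic polynomial of |A|). -/

/-- finite max over a list in 𝕋max -/
def sumT {α : Type} (l : List α) (f : α → WithBot Γ) : WithBot Γ :=
  (l.map f).foldr max ⊥

/-- finite ⊙-product over a list in 𝕋max -/
def prodT {α : Type} (l : List α) (f : α → WithBot Γ) : WithBot Γ :=
  (l.map f).foldr (· + ·) (0 : WithBot Γ)

/-- the permanent over 𝕋max -/
noncomputable def perT {n : ℕ} (M : Matrix (Fin n) (Fin n) (WithBot Γ)) : WithBot Γ :=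
  sumT (Finset.univ : Finset (Equiv.Perm (Fin n))).toList fun π =>
    prodT (List.finRange n) fun i => M i (π i)

/-- coefficient of X^k in the 𝕋max-characteristic polynomial of B -/
noncomputable def charCoeffT {n : ℕ} (B : Matrix (Fin n) (Fin n) (WithBot Γ)) (k : ℕ) : WithBot Γ :=
  if k ≤ n then
    sumT ((Finset.univ : Finset (Fin n)).powersetCard (n - k)).attach.toList fun K =>
      perT (Matrix.of fun a b : Fin (n - k) =>
        B (K.1.orderEmbOfFin (Finset.mem_powersetCard.mp K.2).2 a)
          (K.1.orderEmbOfFin (Finset.mem_powersetCard.mp K.2).2 b))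
  else ⊥

/-- multiplicity of x as a 𝕋max-root of the formal polynomial of degree ≤ n
with coefficients Q: for x = ⊥ it is the lower degree, for x = c ∈ Γ it is the
difference between the largest and smallest exponents attaining
max_k (Q_k + k·c). -/
noncomputable def rootMultT (n : ℕ) (Q : ℕ → WithBot Γ) (x : WithBot Γ) : ℕ :=
  WithBot.recBotCoe
    (sInf {k | Q k ≠ ⊥})
    (fun c =>
      sSup {k | k ≤ n ∧ Q k + ((k • c : Γ) : WithBot Γ)
              = sumT (List.range (n+1)) (fun l => Q l + ((l • c : Γ) : WithBot Γ))}
        - sInf {k | k ≤ n ∧ Q k + ((k • c : Γ) : WithBot Γ)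
              = sumT (List.range (n+1)) (fun l => Q l + ((l • c : Γ) : WithBot Γ))})
    x

end Defs

/-- the signed valuation associated with a valuation v on an ordered field L -/
def svMap {Γ : Type} [AddCommGroup Γ] [LinearOrder Γ] [IsOrderedAddMonoid Γ] {L : Type} [Field L] [LinearOrder L] [IsStrictOrderedRing L]
    (v : L → WithBot Γ) (b : L) : Smax Γ :=
  if b = 0 then szero
  else if 0 < b then WithBot.recBotCoe szero (fun c => some (c, SSign.pos)) (v b)
  else WithBot.recBotCoe szero (fun c => some (c, SSign.neg)) (v b)

end TropPaper

namespace TropPaper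

section Lemmas

variable {Γ : Type} [AddCommGroup Γ] [LinearOrder Γ] [IsOrderedAddMonoid Γ]

theorem sadd_none (a : Smax Γ) : sadd a none = a := by cases a <;> rfl
theorem none_sadd (a : Smax Γ) : sadd none a = a := rfl
theorem smul_none (a : Smax Γ) : smul a none = none := by cases a <;> rfl

theorem sadd_lt' {c d : Γ} (h : c < d) (s t : SSign) :
    sadd (some (c, s)) (some (d, t)) = some (d, t) := by simp [sadd, h]; rfl
theorem sadd_gt' {c d : Γ} (h : d < c) (s t : SSign) :
    sadd (some (c, s)) (some (d, t)) = some (c, s) := by simp [sadd, h, asymm h]; rfl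
theorem sadd_eq' (c : Γ) (s t : SSign) :
    sadd (some (c, s)) (some (c, t)) = some (c, if s = t then s else SSign.bal) := by
  simp [sadd]; rfl

theorem sadd_comm (a b : Smax Γ) : sadd a b = sadd b a := by
  rcases a with _ | ⟨c, s⟩ <;> rcases b with _ | ⟨d, t⟩
  · rfl
  · rfl
  · rfl
  rcases lt_trichotomy c d with h | rfl | h
  · simp only [sadd_lt' h, sadd_gt' h]; rfl
  · simp only [sadd_eq']; cases s <;> cases t <;> rfl
  · simp only [sadd_lt' h, sadd_gt' h]; rfl

theorem sgn_ite_assoc (s t u : SSign) :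
    (if (if s = t then s else SSign.bal) = u then (if s = t then s else SSign.bal)
      else SSign.bal)
    = (if s = (if t = u then t else SSign.bal) then s else SSign.bal) := by
  cases s <;> cases t <;> cases u <;> rfl

theorem sadd_assoc (a b c : Smax Γ) : sadd (sadd a b) c = sadd a (sadd b c) := by
  rcases a with _ | ⟨x, s⟩; · rfl
  rcases b with _ | ⟨y, t⟩; · rfl
  rcases c with _ | ⟨z, u⟩; · rw [sadd_none, sadd_none (some (y, t) : Smax Γ)]
  rcases lt_trichotomy x y with h1 | h1 | h1
  · rcases lt_trichotomy y z with h2 | h2 | h2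
    · simp only [sadd_lt' h1, sadd_lt' h2, sadd_lt' (lt_trans h1 h2)]; rfl
    · subst h2; simp only [sadd_lt' h1, sadd_eq']; rfl
    · simp only [sadd_lt' h1, sadd_gt' h2]; rfl
  · subst h1
    rcases lt_trichotomy x z with h2 | h2 | h2
    · simp only [sadd_eq', sadd_lt' h2]; rfl
    · subst h2; simp only [sadd_eq', sgn_ite_assoc]; rfl
    · simp only [sadd_eq', sadd_gt' h2]; rfl
  · rcases lt_trichotomy x z with h2 | h2 | h2
    · rcases lt_trichotomy y z with h3 | h3 | h3
      · simp only [sadd_gt' h1, sadd_lt' h3, sadd_lt' h2]; rfl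
      · subst h3; simp only [sadd_gt' h1, sadd_eq', sadd_lt' h2]; rfl
      · exact absurd (lt_trans h3 h1) (asymm h2)
    · subst h2
      simp only [sadd_gt' h1, sadd_lt' h1, sadd_eq']; rfl
    · rcases lt_trichotomy y z with h3 | h3 | h3
      · simp only [sadd_gt' h1, sadd_lt' h3, sadd_gt' h2]; rfl
      · subst h3; simp only [sadd_gt' h1, sadd_eq', sadd_gt' h2]; rfl
      · simp only [sadd_gt' h1, sadd_gt' h3, sadd_gt' h2]; rfl

theorem sadd_left_comm (a b c : Smax Γ) : sadd a (sadd b c) = sadd b (sadd a c) := by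
  rw [← sadd_assoc, sadd_comm a b, sadd_assoc]

theorem smod_sadd (a b : Smax Γ) : smod (sadd a b) = max (smod a) (smod b) := by
  rcases a with _ | ⟨c, s⟩
  · simp [none_sadd, smod]
  rcases b with _ | ⟨d, t⟩
  · simp [sadd_none (some (c, s) : Smax Γ), smod]
  rcases lt_trichotomy c d with h | h | h
  · rw [sadd_lt' h]; simp [smod, max_eq_right (WithBot.coe_le_coe.2 h.le)]
  · subst h; rw [sadd_eq']; simp [smod]
  · rw [sadd_gt' h]; simp [smod, max_eq_left (WithBot.coe_le_coe.2 h.le)]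

/-- The Γ-modulus of a nonzero element (junk value 0 at 𝟘). -/
def modv : Smax Γ → Γ
  | none => 0
  | some (c, _) => c

theorem smod_eq_modv {a : Smax Γ} (h : a ≠ (none : Smax Γ)) : smod a = ((modv a : Γ) : WithBot Γ) := by
  rcases a with _ | ⟨c, s⟩
  · exact absurd rfl h
  · rfl

theorem smod_eq_bot_iff {a : Smax Γ} : smod a = ⊥ ↔ a = none := by
  rcases a with _ | ⟨c, s⟩
  · exact iff_of_true rfl rfl
  · simp [smod]

theorem modv_sneg (a : Smax Γ) : modv (sneg a) = modv a := by
  rcases a with _ | ⟨c, s⟩; · rfl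
  cases s <;> rfl

theorem sneg_ne_none {a : Smax Γ} (h : a ≠ none) : sneg a ≠ none := by
  rcases a with _ | ⟨c, s⟩; · exact absurd rfl h
  cases s <;> simp [sneg] <;> exact nofun

theorem smod_sneg (a : Smax Γ) : smod (sneg a) = smod a := by
  rcases a with _ | ⟨c, s⟩; · rfl
  cases s <;> rfl

theorem smod_smul (a b : Smax Γ) : smod (smul a b) = smod a + smod b := by
  rcases a with _ | ⟨c, s⟩; · simp [smul, smod]
  rcases b with _ | ⟨d, t⟩; · simp [smul, smod]
  simp [smul, smod, WithBot.coe_add]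

theorem sadd_absorb {a b : Smax Γ} (h : smod b < smod a) : sadd a b = a := by
  rcases a with _ | ⟨c, s⟩
  · exact absurd h (by simp [smod])
  rcases b with _ | ⟨d, t⟩
  · exact sadd_none _
  · exact sadd_gt' (WithBot.coe_lt_coe.1 h) _ _

theorem szero_sadd (a : Smax Γ) : sadd szero a = a := rfl
theorem sadd_szero (a : Smax Γ) : sadd a szero = a := sadd_none a

theorem sgnMul_pos (t : SSign) : sgnMul SSign.pos t = t := rfl
theorem sgnMul_pos' (s : SSign) : sgnMul s SSign.pos = s := by cases s <;> rfl

theorem sone_smul (a : Smax Γ) : smul sone a = a := by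
  rcases a with _ | ⟨c, s⟩; · rfl
  simp [smul, sone, sgnMul_pos]; rfl

theorem smul_sone (a : Smax Γ) : smul a sone = a := by
  rcases a with _ | ⟨c, s⟩; · rfl
  simp [smul, sone, sgnMul_pos']; rfl

theorem smul_some {c d : Γ} {s t : SSign} :
    smul (some (c, s)) (some (d, t)) = some (c + d, sgnMul s t) := rfl

theorem smul_ne_none {a b : Smax Γ} (ha : a ≠ none) (hb : b ≠ none) : smul a b ≠ none := by
  rcases a with _ | ⟨c, s⟩; · exact absurd rfl ha
  rcases b with _ | ⟨d, t⟩; · exact absurd rfl hb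
  simp [smul]; exact nofun

section Lists
variable {α : Type} {l : List α} {f g : α → Smax Γ}

theorem sumS_nil (f : α → Smax Γ) : sumS ([] : List α) f = szero := rfl
theorem sumS_cons (a : α) (l : List α) (f : α → Smax Γ) :
    sumS (a :: l) f = sadd (f a) (sumS l f) := rfl
theorem prodS_nil (f : α → Smax Γ) : prodS ([] : List α) f = sone := rfl
theorem prodS_cons (a : α) (l : List α) (f : α → Smax Γ) :
    prodS (a :: l) f = smul (f a) (prodS l f) := rfl

theorem sumS_perm {l₁ l₂ : List α} (h : l₁.Perm l₂) (f : α → Smax Γ) :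
    sumS l₁ f = sumS l₂ f := by
  induction h with
  | nil => rfl
  | cons a _ ih => simp only [sumS_cons, ih]
  | swap a b l => simp only [sumS_cons, sadd_left_comm]
  | trans _ _ ih1 ih2 => exact ih1.trans ih2

theorem sumS_extract [DecidableEq α] {a : α} (h : a ∈ l) (f : α → Smax Γ) :
    sumS l f = sadd (f a) (sumS (l.erase a) f) := by
  classical
  rw [sumS_perm (List.perm_cons_erase h) f, sumS_cons]

theorem sumS_eq_zero (h : ∀ a ∈ l, f a = szero) : sumS l f = szero := by
  induction l with
  | nil => rfl
  | cons b t ih =>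
      rw [sumS_cons, h b (by simp), szero_sadd]
      exact ih fun a ha => h a (by simp [ha])

theorem sumS_single [DecidableEq α] {a : α} (hnd : l.Nodup) (ha : a ∈ l)
    (h : ∀ b ∈ l, b ≠ a → f b = szero) : sumS l f = f a := by
  rw [sumS_extract ha f, sumS_eq_zero, sadd_szero]
  intro b hb
  exact h b (List.mem_of_mem_erase hb) (fun hba => (List.Nodup.not_mem_erase hnd) (hba ▸ hb))

theorem sumS_pair [DecidableEq α] {a b : α} (hnd : l.Nodup) (ha : a ∈ l) (hb : b ∈ l)
    (hab : a ≠ b) (h : ∀ c ∈ l, c ≠ a → c ≠ b → f c = szero) :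
    sumS l f = sadd (f a) (f b) := by
  rw [sumS_extract ha f]
  congr 1
  refine sumS_single (hnd.erase a) (List.mem_erase_of_ne (Ne.symm hab) |>.2 hb) ?_
  intro c hc hcb
  exact h c (List.mem_of_mem_erase hc) (fun hca => (List.Nodup.not_mem_erase hnd) (hca ▸ hc)) hcb

theorem smod_sumS_lt {c : WithBot Γ} (hc : ⊥ < c) (h : ∀ a ∈ l, smod (f a) < c) :
    smod (sumS l f) < c := by
  induction l with
  | nil => exact hc
  | cons b t ih =>
      rw [sumS_cons, smod_sadd]
      exact max_lt (h b (by simp)) (ih fun a' ha' => h a' (List.mem_cons_of_mem _ ha'))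

theorem prodS_congr (h : ∀ a ∈ l, f a = g a) : prodS l f = prodS l g := by
  induction l with
  | nil => rfl
  | cons b t ih =>
      rw [prodS_cons, prodS_cons, h b (by simp), ih fun a ha => h a (by simp [ha])]

theorem prodS_ne_none (h : ∀ a ∈ l, f a ≠ none) : prodS l f ≠ none := by
  induction l with
  | nil => simp [prodS_nil, sone]; exact nofun
  | cons b t ih =>
      rw [prodS_cons]
      exact smul_ne_none (h b (by simp)) (ih fun a' ha' => h a' (List.mem_cons_of_mem _ ha'))

theorem prodS_eq_none {a : α} (ha : a ∈ l) (h : f a = none) : prodS l f = none := by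
  induction l with
  | nil => simp at ha
  | cons b t ih =>
      rw [prodS_cons]
      rcases List.mem_cons.1 ha with rfl | ha'
      · rw [h]; rfl
      · rw [ih ha', smul_none]

theorem smod_prodS : smod (prodS l f) = (l.map fun a => smod (f a)).sum := by
  induction l with
  | nil => simp [prodS_nil, sone, smod]
  | cons b t ih => rw [prodS_cons, smod_smul, ih, List.map_cons, List.sum_cons]

theorem sgnMul_bal_iff {s t : SSign} : sgnMul s t = SSign.bal ↔ s = SSign.bal ∨ t = SSign.bal := by
  cases s <;> cases t <;> simp [sgnMul]

theorem isBal_prodS (h : ∀ a ∈ l, f a ≠ none) :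
    IsBal (prodS l f) ↔ ∃ a ∈ l, IsBal (f a) := by
  induction l with
  | nil => simp [prodS_nil, sone, IsBal]
  | cons b t ih =>
      rw [prodS_cons]
      have hb := h b (by simp)
      have hr : prodS t f ≠ none := prodS_ne_none (fun a ha => h a (List.mem_cons_of_mem _ ha))
      rcases hfb : f b with _ | ⟨c, s⟩; · exact absurd hfb hb
      rcases hfp : prodS t f with _ | ⟨d, u⟩; · exact absurd hfp hr
      rw [smul_some]
      simp only [IsBal, List.mem_cons]
      rw [sgnMul_bal_iff]
      constructor
      · rintro (hs | hu)
        · exact ⟨b, Or.inl rfl, by simp [hfb, IsBal, hs]⟩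
        · have := (ih fun a' ha' => h a' (List.mem_cons_of_mem _ ha')).1 (by rw [hfp]; exact hu)
          rcases this with ⟨a, ha, hba⟩
          exact ⟨a, Or.inr ha, hba⟩
      · rintro ⟨a, rfl | ha, hba⟩
        · rw [hfb] at hba; exact Or.inl hba
        · right
          have := (ih fun a' ha' => h a' (List.mem_cons_of_mem _ ha')).2 ⟨a, ha, hba⟩
          rw [hfp] at this; exact this

end Lists

theorem coe_finset_sum {α : Type} (s : Finset α) (g : α → Γ) :
    (∑ i ∈ s, ((g i : Γ) : WithBot Γ)) = ((∑ i ∈ s, g i : Γ) : WithBot Γ) := by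
  classical
  induction s using Finset.induction with
  | empty => simp
  | insert a s' h ih => rw [Finset.sum_insert h, Finset.sum_insert h, ih, WithBot.coe_add]

theorem isPos_some {c : Γ} {s : SSign} : IsPos (some (c, s) : Smax Γ) ↔ s = SSign.pos := Iff.rfl
theorem isBal_some {c : Γ} {s : SSign} : IsBal (some (c, s) : Smax Γ) ↔ s = SSign.bal := Iff.rfl
theorem isSigned_some {c : Γ} {s : SSign} : IsSigned (some (c, s) : Smax Γ) ↔ s ≠ SSign.bal := Iff.rfl
theorem isSigned_none : IsSigned (none : Smax Γ) := trivial

theorem ssub_szero (a : Smax Γ) : ssub a szero = a := sadd_none a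

theorem smod_ssub (a b : Smax Γ) : smod (ssub a b) = max (smod a) (smod b) := by
  rw [ssub, smod_sadd, smod_sneg]

theorem slt_szero_iff {q : Smax Γ} : slt szero q ↔ IsPos q ∧ q ≠ szero := by
  rw [slt, ssub_szero]

theorem bal_absorb {c : Γ} {b : Smax Γ} (h : smod b ≤ (c : WithBot Γ)) :
    sadd (some (c, SSign.bal)) b = some (c, SSign.bal) := by
  rcases b with _ | ⟨d, t⟩
  · exact sadd_none _
  · have hdc : d ≤ c := WithBot.coe_le_coe.1 h
    rcases lt_or_eq_of_le hdc with h' | h'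
    · exact sadd_gt' h' _ _
    · subst h'; rw [sadd_eq']; cases t <;> rfl

section MatStuff

variable {n : ℕ}

theorem idMatS_diag (i : Fin n) : (idMatS : Matrix (Fin n) (Fin n) (Smax Γ)) i i = sone :=
  if_pos rfl

theorem idMatS_off {i j : Fin n} (h : i ≠ j) :
    (idMatS : Matrix (Fin n) (Fin n) (Smax Γ)) i j = szero := if_neg h

theorem charMatS_diag (x : Smax Γ) (A : Matrix (Fin n) (Fin n) (Smax Γ)) (i : Fin n) :
    charMatS x A i i = ssub x (A i i) := by
  show ssub (smul x (idMatS i i)) (A i i) = _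
  rw [idMatS_diag, smul_sone]

theorem charMatS_off (x : Smax Γ) (A : Matrix (Fin n) (Fin n) (Smax Γ)) {i j : Fin n}
    (h : i ≠ j) : charMatS x A i j = sneg (A i j) := by
  show ssub (smul x (idMatS i j)) (A i j) = _
  rw [idMatS_off h, show smul x szero = szero from smul_none x, ssub]
  rfl

theorem permSignS_one : (permSignS (1 : Equiv.Perm (Fin n)) : Smax Γ) = sone := by
  rw [permSignS, if_pos]
  rw [Equiv.Perm.sign_one, Units.val_one]

theorem smod_permSignS (π : Equiv.Perm (Fin n)) :
    smod (permSignS π : Smax Γ) = ((0 : Γ) : WithBot Γ) := by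
  unfold permSignS; split_ifs <;> rfl

/-- From TPD: diagonal entries are positive and nonzero. -/
theorem diag_pos {A : Matrix (Fin n) (Fin n) (Smax Γ)} (hTPD : TPD A) (i : Fin n) :
    A i i = some (modv (A i i), SSign.pos) := by
  classical
  set x : Fin n → Smax Γ := fun k => if k = i then sone else szero with hx
  have hxi : x i = sone := if_pos rfl
  have hxk : ∀ k, k ≠ i → x k = none := fun k hk => if_neg hk
  have hsig : VecSigned x := by
    intro k
    by_cases h : k = i
    · subst h; rw [hxi]; exact isSigned_some.2 (by simp)
    · rw [hxk k h]; exact isSigned_none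
  have hne : x ≠ zeroVecS := by
    intro h
    have := congrFun h i
    rw [hxi] at this
    exact nomatch this
  have hq : quadFormS A x = A i i := by
    show sumS (List.finRange n) _ = _
    rw [sumS_single (List.nodup_finRange n) (List.mem_finRange i) ?_]
    · rw [sumS_single (List.nodup_finRange n) (List.mem_finRange i) ?_]
      · rw [hxi, smul_sone, sone_smul]
      · intro b _ hb
        rw [hxk b hb, smul_none, smul_none]; exact rfl
    · intro b _ hb
      refine sumS_eq_zero fun c _ => ?_
      rw [hxk b hb]
      rfl
  have hs := hTPD x hsig hne
  rw [hq, slt_szero_iff] at hs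
  rcases hAii : A i i with _ | ⟨c, s⟩
  · rw [hAii] at hs; exact absurd rfl hs.2
  · rw [hAii] at hs
    have : s = SSign.pos := isPos_some.1 hs.1
    subst this
    rfl

/-- From TPD + symmetry: off-diagonal moduli are strictly dominated. -/
theorem off_diag_key {A : Matrix (Fin n) (Fin n) (Smax Γ)} (hsym : SymmS A) (hTPD : TPD A)
    (hA : ∀ i, A i i = some (modv (A i i), SSign.pos)) {i j : Fin n}
    (hij : i ≠ j) (hz : A i j ≠ szero) :
    modv (A i j) + modv (A i j) < modv (A i i) + modv (A j j) := by
  classical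
  by_contra hcon
  push_neg at hcon
  rcases hAij : A i j with _ | ⟨s, σ⟩
  · exact absurd hAij hz
  rw [hAij] at hcon
  set di := modv (A i i) with hdi
  set dj := modv (A j j) with hdj
  have hcon' : di + dj ≤ s + s := by simpa [modv] using hcon
  set τ : SSign := if σ = SSign.pos then SSign.neg else SSign.pos with hτdef
  have hτ : τ ≠ SSign.bal := by rw [hτdef]; split_ifs <;> simp
  have hττ : sgnMul τ τ = SSign.pos := by rw [hτdef]; split_ifs <;> rfl
  have hστ : sgnMul σ τ ≠ SSign.pos := by
    rw [hτdef]; cases σ <;> simp [sgnMul]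
  set c1 : Γ := (s - di) + (di + (s - di)) with hc1
  set x : Fin n → Smax Γ := fun k =>
    if k = i then some (s - di, SSign.pos) else if k = j then some (0, τ) else none with hx
  have hxi : x i = some (s - di, SSign.pos) := if_pos rfl
  have hxj : x j = some (0, τ) := by
    rw [hx]; simp [Ne.symm hij]; rfl
  have hxk : ∀ k, k ≠ i → k ≠ j → x k = none := by
    intro k h1 h2; rw [hx]; exact (if_neg h1).trans (if_neg h2)
  have hsig : VecSigned x := by
    intro k
    by_cases h1 : k = i
    · subst h1; rw [hxi]; exact isSigned_some.2 (by simp)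
    by_cases h2 : k = j
    · subst h2; rw [hxj]; exact isSigned_some.2 hτ
    · rw [hxk k h1 h2]; exact isSigned_none
  have hne : x ≠ zeroVecS := by
    intro h
    have := congrFun h i
    rw [hxi] at this
    exact nomatch this
  have hq : quadFormS A x = some (c1, SSign.bal) := by
    show sumS (List.finRange n) _ = _
    rw [sumS_pair (List.nodup_finRange n) (List.mem_finRange i) (List.mem_finRange j) hij ?_]
    · have hinner_i :
          sumS (List.finRange n) (fun j' => smul (x i) (smul (A i j') (x j')))
            = some (c1, SSign.bal) := by
        rw [sumS_pair (List.nodup_finRange n) (List.mem_finRange i) (List.mem_finRange j)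
            hij ?_]
        · rw [hxi, hxj, hA i, hAij, ← hdi, smul_some, smul_some, smul_some, smul_some]
          simp only [sgnMul_pos, sgnMul_pos']
          rw [show (s - di) + (s + 0) = c1 by rw [hc1]; abel,
            show (s - di) + (di + (s - di)) = c1 from rfl, sadd_eq',
            if_neg (fun h => hστ h.symm)]
        · intro b _ hbi hbj
          rw [hxk b hbi hbj, smul_none, smul_none]; exact rfl
      have hinner_j :
          smod (sumS (List.finRange n) (fun j' => smul (x j) (smul (A j j') (x j'))))
            ≤ (c1 : WithBot Γ) := by
        rw [sumS_pair (List.nodup_finRange n) (List.mem_finRange i) (List.mem_finRange j)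
            hij ?_]
        · rw [hxi, hxj, hA j, hsym j i, hAij, ← hdj, smul_some, smul_some, smul_some,
            smul_some]
          refine (smod_sadd _ _).trans_le (max_le ?_ ?_)
          · show ((0 + (s + (s - di)) : Γ) : WithBot Γ) ≤ _
            exact WithBot.coe_le_coe.2 (le_of_eq (by rw [hc1]; abel))
          · show ((0 + (dj + 0) : Γ) : WithBot Γ) ≤ _
            refine WithBot.coe_le_coe.2 ?_
            have h2 : dj ≤ s + s - di := le_sub_iff_add_le.2 (by rwa [add_comm] at hcon')
            calc (0 : Γ) + (dj + 0) = dj := by abel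
              _ ≤ s + s - di := h2
              _ = c1 := by rw [hc1]; abel
        · intro b _ hbi hbj
          rw [hxk b hbi hbj, smul_none, smul_none]; exact rfl
      rw [hinner_i]
      exact bal_absorb hinner_j
    · intro b _ hbi hbj
      refine sumS_eq_zero fun c _ => ?_
      rw [hxk b hbi hbj]
      rfl
  have hs := hTPD x hsig hne
  rw [hq, slt_szero_iff (q := (some (c1, SSign.bal) : Smax Γ))] at hs
  exact absurd (isPos_some.1 hs.1) (by simp)

end MatStuff

section DetStuff

variable {n : ℕ}

theorem detS_def (M : Matrix (Fin n) (Fin n) (Smax Γ)) :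
    detS M = sumS (Finset.univ : Finset (Equiv.Perm (Fin n))).toList
      (fun π => smul (permSignS π) (prodS (List.finRange n) fun i => M i (π i))) := rfl

theorem detS_charMat {A : Matrix (Fin n) (Fin n) (Smax Γ)}
    (hA : ∀ i, A i i = some (modv (A i i), SSign.pos))
    (key : ∀ i j : Fin n, i ≠ j → A i j ≠ szero →
      modv (A i j) + modv (A i j) < modv (A i i) + modv (A j j))
    (x : Smax Γ) :
    detS (charMatS x A) = prodS (List.finRange n) (fun i => ssub x (A i i)) := by
  classical
  set P : Smax Γ := prodS (List.finRange n) (fun i => ssub x (A i i)) with hP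
  have hAne : ∀ i : Fin n, A i i ≠ none := fun i h => by
    rw [hA i] at h; exact nomatch h
  have hfac : ∀ i : Fin n, ssub x (A i i) ≠ none := by
    intro i hcon
    have h1 : smod (ssub x (A i i)) = ⊥ := by rw [hcon]; rfl
    rw [smod_ssub] at h1
    have h2 := (max_eq_bot.1 h1).2
    rw [smod_eq_modv (hAne i)] at h2
    exact nomatch h2
  have hPne : P ≠ none := prodS_ne_none (fun i _ => hfac i)
  have hPmod : smod P = ((∑ i, modv (ssub x (A i i)) : Γ) : WithBot Γ) := by
    rw [hP, smod_prodS,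
      List.map_congr_left (fun (a : Fin n) _ =>
        smod_eq_modv (hfac a) : ∀ a ∈ List.finRange n, _),
      ← Fin.sum_univ_def, coe_finset_sum]
  have h1mem : (1 : Equiv.Perm (Fin n)) ∈ (Finset.univ : Finset (Equiv.Perm (Fin n))).toList :=
    Finset.mem_toList.2 (Finset.mem_univ _)
  rw [detS_def]
  set f : Equiv.Perm (Fin n) → Smax Γ := fun π =>
    smul (permSignS π) (prodS (List.finRange n) fun i => charMatS x A i (π i)) with hf
  rw [sumS_extract h1mem]
  have hterm1 : f 1 = P := by
    rw [hf]
    show smul (permSignS 1)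
        (prodS (List.finRange n) fun i => charMatS x A i ((1 : Equiv.Perm (Fin n)) i)) = P
    rw [permSignS_one, sone_smul, hP]
    refine prodS_congr fun i _ => ?_
    rw [Equiv.Perm.one_apply, charMatS_diag]
  rw [hterm1]
  have hrest : smod (sumS (((Finset.univ : Finset (Equiv.Perm (Fin n))).toList).erase 1) f)
      < smod P := by
    refine smod_sumS_lt (by rw [hPmod]; exact WithBot.bot_lt_coe _) ?_
    intro π hπ
    have hπne : π ≠ 1 := fun h => (List.Nodup.not_mem_erase (Finset.nodup_toList _)) (h ▸ hπ)
    by_cases hz : ∀ i : Fin n, π i ≠ i → A i (π i) ≠ szero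
    · -- all relevant entries nonzero
      have hent : ∀ i : Fin n, charMatS x A i (π i) ≠ none := by
        intro i
        by_cases hfix : π i = i
        · rw [hfix, charMatS_diag]; exact hfac i
        · rw [charMatS_off _ _ (fun h => hfix h.symm)]
          exact sneg_ne_none (hz i hfix)
      have hfmod : smod (f π) = ((∑ i, modv (charMatS x A i (π i)) : Γ) : WithBot Γ) := by
        rw [hf]
        show smod (smul (permSignS π)
          (prodS (List.finRange n) fun i => charMatS x A i (π i))) = _
        rw [smod_smul, smod_permSignS, smod_prodS,
          List.map_congr_left (fun (a : Fin n) _ =>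
            smod_eq_modv (hent a) : ∀ a ∈ List.finRange n, _),
          ← Fin.sum_univ_def, coe_finset_sum, ← WithBot.coe_add, zero_add]
      rw [hfmod, hPmod, WithBot.coe_lt_coe]
      set supp : Finset (Fin n) := Finset.univ.filter (fun i => π i ≠ i) with hsupp
      have hsne : supp.Nonempty := by
        by_contra hcon
        rw [Finset.not_nonempty_iff_eq_empty] at hcon
        refine hπne (Equiv.ext fun i => ?_)
        by_contra hi
        rw [Equiv.Perm.one_apply] at hi
        have : i ∈ supp := by rw [hsupp]; simp [hi]
        rw [hcon] at this
        exact absurd this (Finset.notMem_empty i)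
      rw [← Finset.sum_add_sum_compl supp (fun i => modv (charMatS x A i (π i))),
        ← Finset.sum_add_sum_compl supp (fun i => modv (ssub x (A i i)))]
      have hcompl : ∑ i ∈ suppᶜ, modv (charMatS x A i (π i))
          = ∑ i ∈ suppᶜ, modv (ssub x (A i i)) := by
        refine Finset.sum_congr rfl fun i hi => ?_
        have hfix : π i = i := by
          have := Finset.mem_compl.1 hi
          rw [hsupp] at this
          simpa using this
        rw [hfix, charMatS_diag]
      rw [hcompl]
      refine add_lt_add_left ?_ _
      have hstep1 : ∑ i ∈ supp, modv (charMatS x A i (π i))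
          = ∑ i ∈ supp, modv (A i (π i)) := by
        refine Finset.sum_congr rfl fun i hi => ?_
        have hfix : π i ≠ i := by rw [hsupp] at hi; simpa using hi
        rw [charMatS_off _ _ (fun h => hfix h.symm), modv_sneg]
      rw [hstep1]
      have hdm : ∀ i : Fin n, modv (A i i) ≤ modv (ssub x (A i i)) := by
        intro i
        have h1 : ((modv (A i i) : Γ) : WithBot Γ) ≤ smod (ssub x (A i i)) := by
          rw [smod_ssub, ← smod_eq_modv (hAne i)]
          exact le_max_right _ _
        rw [smod_eq_modv (hfac i)] at h1
        exact WithBot.coe_le_coe.1 h1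
      have hlt : ∑ i ∈ supp, modv (A i (π i)) < ∑ i ∈ supp, modv (A i i) := by
        have hdouble : ∑ i ∈ supp, (modv (A i (π i)) + modv (A i (π i)))
            < ∑ i ∈ supp, (modv (A i i) + modv (A (π i) (π i))) := by
          refine Finset.sum_lt_sum_of_nonempty hsne fun i hi => ?_
          have hfix : π i ≠ i := by rw [hsupp] at hi; simpa using hi
          exact key i (π i) (fun h => hfix h.symm) (hz i hfix)
        rw [Finset.sum_add_distrib, Finset.sum_add_distrib] at hdouble
        have hperm : ∑ i ∈ supp, modv (A (π i) (π i)) = ∑ i ∈ supp, modv (A i i) :=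
          Equiv.Perm.sum_comp π supp (fun k => modv (A k k))
            (by intro a ha; rw [hsupp]; simpa using ha)
        rw [hperm] at hdouble
        by_contra hcon
        push_neg at hcon
        exact absurd hdouble (not_lt.2 (add_le_add hcon hcon))
      exact lt_of_lt_of_le hlt (Finset.sum_le_sum fun i _ => hdm i)
    · -- some entry is zero: the whole term vanishes
      push_neg at hz
      obtain ⟨i, hfix, hzero⟩ := hz
      have : f π = none := by
        rw [hf]
        show smul (permSignS π)
          (prodS (List.finRange n) fun i => charMatS x A i (π i)) = none
        rw [prodS_eq_none (List.mem_finRange i)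
          (by rw [charMatS_off _ _ (fun h => hfix h.symm), hzero]; rfl), smul_none]
      rw [this, hPmod]
      exact WithBot.bot_lt_coe _
  exact sadd_absorb hrest

theorem factor_bal_iff {A : Matrix (Fin n) (Fin n) (Smax Γ)}
    (hA : ∀ i, A i i = some (modv (A i i), SSign.pos)) {γ : Smax Γ} (hγ : IsSigned γ)
    (i : Fin n) : IsBal (ssub γ (A i i)) ↔ γ = A i i := by
  rw [hA i]
  set d := modv (A i i)
  show IsBal (sadd γ (sneg (some (d, SSign.pos)))) ↔ _
  rw [show sneg (some (d, SSign.pos)) = some (d, SSign.neg) from rfl]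
  rcases γ with _ | ⟨c, s⟩
  · rw [none_sadd (some (d, SSign.neg) : Smax Γ)]
    exact iff_of_false (fun hb => nomatch hb) (fun hcon => nomatch hcon)
  · have hs : s ≠ SSign.bal := hγ
    rcases lt_trichotomy c d with h | h | h
    · rw [sadd_lt' h]
      refine iff_of_false (fun hb => nomatch hb) ?_
      intro hcon
      replace hcon := Option.some.inj hcon; rw [Prod.mk.injEq] at hcon
      exact absurd hcon.1 (ne_of_lt h)
    · subst h
      rw [sadd_eq']
      cases s
      · exact iff_of_true (by exact rfl) rfl
      · refine iff_of_false (fun hb => nomatch hb) ?_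
        intro hcon
        replace hcon := Option.some.inj hcon; rw [Prod.mk.injEq] at hcon
        exact nomatch hcon.2
      · exact absurd rfl hs
    · rw [sadd_gt' h]
      refine iff_of_false (fun hb => hs hb) ?_
      intro hcon
      replace hcon := Option.some.inj hcon; rw [Prod.mk.injEq] at hcon
      exact absurd hcon.1 (ne_of_gt h)

theorem eigen_iff {A : Matrix (Fin n) (Fin n) (Smax Γ)}
    (hA : ∀ i, A i i = some (modv (A i i), SSign.pos)) {γ : Smax Γ} (hγ : IsSigned γ) :
    IsBal (prodS (List.finRange n) fun i => ssub γ (A i i)) ↔ ∃ i : Fin n, γ = A i i := by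
  have hAne : ∀ i : Fin n, A i i ≠ none := fun i h => by
    rw [hA i] at h; exact nomatch h
  have hfac : ∀ i : Fin n, ssub γ (A i i) ≠ none := by
    intro i hcon
    have h1 : smod (ssub γ (A i i)) = ⊥ := by rw [hcon]; rfl
    rw [smod_ssub] at h1
    have h2 := (max_eq_bot.1 h1).2
    rw [smod_eq_modv (hAne i)] at h2
    exact nomatch h2
  rw [isBal_prodS (fun i _ => hfac i)]
  constructor
  · rintro ⟨i, _, hbal⟩
    exact ⟨i, (factor_bal_iff hA hγ i).1 hbal⟩
  · rintro ⟨i, hi⟩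
    exact ⟨i, List.mem_finRange i, (factor_bal_iff hA hγ i).2 hi⟩

end DetStuff

end Lemmas

/-- for a TPD matrix, the 𝕊max-eigenvalues (signed γ with
det(γ⊙I ⊖ A) ∇ 𝟘) are exactly the diagonal entries, and the characteristic
polynomial function factors through the diagonal entries. -/
theorem smax_eigenvalues_of_tpd {Γ : Type} [AddCommGroup Γ] [LinearOrder Γ] [IsOrderedAddMonoid Γ]
    [Nontrivial Γ] (hdiv : DivisibleGrp Γ) {n : ℕ}
    (A : Matrix (Fin n) (Fin n) (Smax Γ)) (hsym : SymmS A) (hsgn : MatSigned A)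
    (hTPD : TPD A) :
    (∀ γ : Smax Γ, IsSigned γ →
      (IsBal (detS (charMatS γ A)) ↔ ∃ i : Fin n, γ = A i i)) ∧
    (∀ x : Smax Γ,
      detS (charMatS x A) = prodS (List.finRange n) (fun i => ssub x (A i i))) := by
  have hA : ∀ i, A i i = some (modv (A i i), SSign.pos) := diag_pos hTPD
  have key : ∀ i j : Fin n, i ≠ j → A i j ≠ szero →
      modv (A i j) + modv (A i j) < modv (A i i) + modv (A j j) :=
    fun i j hij hz => off_diag_key hsym hTPD hA hij hz
  have hdet := detS_charMat hA key
  refine ⟨?_, hdet⟩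
  intro γ hγ
  rw [hdet γ]
  exact eigen_iff hA hγ

end TropPaper
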